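/- arXiv:1904.11099 — 2 statements merged into one kernel-verified Lean document; each statement's English description precedes it below -/
import Mathlib

section
/- Renormalization preserves the weight of the redistribution point: the sum of the renormalized weights over all depth-(r+e) descendants of the d-redistribution point ρ equals the original weight h(ρ), for every e ≥ 0. -/
/-- An abstract rooted tree: every vertex has a parent (the root is its own
parent), a depth (distance to the root), every vertex is connected to the
root, and each depth level is finite (finitely-branching). -/
structure RTree (V : Type) where
  root : V
  parent : V → V
  depth : V → ℕ
  parent_root : parent root = root
  depth_root : depth root = 0
  depth_parent : ∀ v : V, v ≠ root → depth (parent v) + 1 = depth v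
  ancestor_root : ∀ v : V, parent^[depth v] v = root
  level_finite : ∀ d : ℕ, {v : V | depth v = d}.Finite

namespace RTree

variable {V : Type}

/-- The children of a vertex. -/
def children (T : RTree V) (v : V) : Set V :=
  {u : V | T.parent u = v ∧ u ≠ T.root}

/-- The descendants of `v` that lie `e` levels below `v`. -/
def descAt (T : RTree V) (e : ℕ) (v : V) : Set V :=
  {u : V | T.parent^[e] u = v ∧ T.depth u = T.depth v + e}

end RTree

/-- A coherent weight function (a Hintikka tree): the root gets weight 1 and
the weight of each vertex is the sum of the weights of its children. -/
def Coherent {V : Type} (T : RTree V) (h : V → ℝ) : Prop :=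
  h T.root = 1 ∧ ∀ v : V, h v = ∑ᶠ u ∈ T.children v, h u
open scoped Classical

/-- `u` is an ancestor of (or equal to) `v`. -/
def AncOrEq {V : Type} (T : RTree V) (u v : V) : Prop :=
  ∃ k : ℕ, T.parent^[k] v = u ∧ T.depth v = T.depth u + k

/-- `u` is a proper descendant of `ρ`. -/
def ProperDesc {V : Type} (T : RTree V) (ρ u : V) : Prop :=
  ∃ j : ℕ, 0 < j ∧ T.parent^[j] u = ρ ∧ T.depth u = T.depth ρ + j

/-- `u` is supported (relative to weights `h`, target depth `D`, and the
refuted depth-`D` vertex `w`): there is a chain from `u` down to some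
depth-`D` vertex `v ≠ w` along which `h` is positive (for vertices deeper
than `D`, we require the ancestor at depth `D` to avoid `w` and to carry
positive weight). -/
def Supported {V : Type} (T : RTree V) (h : V → ℝ) (D : ℕ) (w : V) (u : V) : Prop :=
  if T.depth u ≤ D then
    ∃ v : V, T.depth v = D ∧ v ≠ w ∧ T.parent^[D - T.depth u] v = u ∧
      ∀ k : ℕ, k ≤ D - T.depth u → 0 < h (T.parent^[k] v)
  else
    T.parent^[T.depth u - D] u ≠ w ∧ 0 < h (T.parent^[T.depth u - D] u)

/-- The total renormalization constant: sum of `h` over the children of `ρ`. -/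
noncomputable def Ztot {V : Type} (T : RTree V) (h : V → ℝ) (ρ : V) : ℝ :=
  ∑ᶠ u ∈ T.children ρ, h u

/-- The positive renormalization constant: sum of `h` over the supported
children of `ρ`. -/
noncomputable def Zplus {V : Type} (T : RTree V) (h : V → ℝ) (D : ℕ) (w ρ : V) : ℝ :=
  ∑ᶠ u ∈ T.children ρ ∩ {u : V | Supported T h D w u}, h u

/-- Renormalization of `h` refuting the depth-`D` vertex `w`, with
redistribution point `ρ`: zero the unsupported descendants of `ρ`, rescale
the supported descendants of `ρ` by `Z/Z⁺`, and leave everything else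
unchanged. -/
noncomputable def renorm {V : Type} (T : RTree V) (h : V → ℝ) (D : ℕ) (w ρ : V) : V → ℝ :=
  fun u =>
    if ProperDesc T ρ u then
      if Supported T h D w u then (Ztot T h ρ / Zplus T h D w ρ) * h u else 0
    else h u

/-- `ρ` is the redistribution point for refuting the depth-`D` vertex `w`:
it is the deepest ancestor of `w` having a supported child. -/
def IsRedistPoint {V : Type} (T : RTree V) (h : V → ℝ) (D : ℕ) (w ρ : V) : Prop :=
  AncOrEq T ρ w ∧ (∃ c ∈ T.children ρ, Supported T h D w c) ∧
    ∀ u : V, AncOrEq T u w → T.depth ρ < T.depth u →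
      ∀ c ∈ T.children u, ¬ Supported T h D w c

section Aux

variable {V : Type} (T : RTree V)

lemma depth_iter : ∀ (k : ℕ) (v : V), k ≤ T.depth v →
    T.depth (T.parent^[k] v) + k = T.depth v := by
  intro k
  induction k with
  | zero => simp
  | succ n ih =>
    intro v hk
    have h2 := ih v (by omega)
    have hxr : T.parent^[n] v ≠ T.root := by
      intro hh
      rw [hh, T.depth_root] at h2
      omega
    have h3 := T.depth_parent _ hxr
    rw [Function.iterate_succ_apply']
    omega

lemma depth_child {u c : V} (hc : c ∈ T.children u) :
    T.depth c = T.depth u + 1 := by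
  have := T.depth_parent c hc.2
  rw [hc.1] at this
  omega

lemma children_finite (u : V) : (T.children u).Finite := by
  apply (T.level_finite (T.depth u + 1)).subset
  intro c hc
  exact depth_child T hc

lemma descAt_finite (e : ℕ) (ρ : V) : (T.descAt e ρ).Finite := by
  apply (T.level_finite (T.depth ρ + e)).subset
  intro c hc
  exact hc.2

variable {h : V → ℝ}

lemma h_eq_sum (hcoh : Coherent T h) (u : V) :
    h u = ∑ c ∈ (children_finite T u).toFinset, h c := by
  rw [hcoh.2 u]
  exact finsum_mem_eq_finite_toFinset_sum h (children_finite T u)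

lemma child_le (hcoh : Coherent T h) (hnn : ∀ v : V, 0 ≤ h v) {u c : V}
    (hc : c ∈ T.children u) : h c ≤ h u := by
  rw [h_eq_sum T hcoh u]
  exact Finset.single_le_sum (fun i _ => hnn i)
    ((children_finite T u).mem_toFinset.mpr hc)

lemma exists_child_pos (hcoh : Coherent T h) (hnn : ∀ v : V, 0 ≤ h v) {u : V}
    (hu : 0 < h u) : ∃ c ∈ T.children u, 0 < h c := by
  by_contra hno
  push_neg at hno
  have : h u = 0 := by
    rw [h_eq_sum T hcoh u]
    apply Finset.sum_eq_zero
    intro c hcm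
    have h1 := hno c ((children_finite T u).mem_toFinset.mp hcm)
    linarith [hnn c]
  linarith

lemma chain_down (hcoh : Coherent T h) (hnn : ∀ v : V, 0 ≤ h v) (D : ℕ) :
    ∀ (n : ℕ) (v : V), T.depth v + n = D → 0 < h v →
    ∃ v' : V, T.depth v' = D ∧ T.parent^[n] v' = v ∧
      ∀ k ≤ n, 0 < h (T.parent^[k] v') := by
  intro n
  induction n with
  | zero =>
    intro v hd hv
    exact ⟨v, by omega, rfl, fun k hk => by
      have : k = 0 := by omega
      subst this; simpa using hv⟩
  | succ n ih =>
    intro v hd hv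
    obtain ⟨c, hc, hcp⟩ := exists_child_pos T hcoh hnn hv
    have hdc : T.depth c = T.depth v + 1 := depth_child T hc
    obtain ⟨v', hv'D, hv'p, hv'pos⟩ := ih c (by omega) hcp
    refine ⟨v', hv'D, ?_, ?_⟩
    · rw [Function.iterate_succ_apply', hv'p]; exact hc.1
    · intro k hk
      rcases Nat.lt_or_ge k (n + 1) with h1 | h1
      · exact hv'pos k (by omega)
      · have : k = n + 1 := by omega
        subst this
        rw [Function.iterate_succ_apply', hv'p, hc.1]
        exact hv

variable {D : ℕ} {w : V}

lemma supported_of_child (hcoh : Coherent T h) (hnn : ∀ v : V, 0 ≤ h v) {u c : V}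
    (hc : c ∈ T.children u) (hs : Supported T h D w c) : Supported T h D w u := by
  have hdc : T.depth c = T.depth u + 1 := depth_child T hc
  unfold Supported at hs ⊢
  by_cases h1 : T.depth c ≤ D
  · rw [if_pos h1] at hs
    rw [if_pos (by omega)]
    obtain ⟨v, hvD, hvw, hvp, hvpos⟩ := hs
    have hDu : D - T.depth u = (D - T.depth c) + 1 := by omega
    refine ⟨v, hvD, hvw, ?_, ?_⟩
    · rw [hDu, Function.iterate_succ_apply', hvp]; exact hc.1
    · intro k hk
      rcases Nat.lt_or_ge k (D - T.depth u) with h2 | h2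
      · exact hvpos k (by omega)
      · have hk2 : k = D - T.depth u := by omega
        subst hk2
        rw [hDu, Function.iterate_succ_apply', hvp, hc.1]
        have h3 : 0 < h c := by
          have := hvpos (D - T.depth c) le_rfl
          rwa [hvp] at this
        have := child_le T hcoh hnn hc
        linarith
  · rw [if_neg h1] at hs
    by_cases h2 : T.depth u ≤ D
    · have hdu : T.depth u = D := by omega
      have h3 : T.depth c - D = 1 := by omega
      rw [h3] at hs
      simp only [Function.iterate_one, hc.1] at hs
      rw [if_pos h2]
      refine ⟨u, hdu, hs.1, by simp [hdu], ?_⟩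
      intro k hk
      have : k = 0 := by omega
      subst this; simpa using hs.2
    · rw [if_neg h2]
      have h3 : T.depth c - D = (T.depth u - D) + 1 := by omega
      rw [h3, Function.iterate_succ_apply, hc.1] at hs
      exact hs

lemma child_supported {ρ : V} (hcoh : Coherent T h) (hnn : ∀ v : V, 0 ≤ h v)
    (hwD : T.depth w = D) (hρ : IsRedistPoint T h D w ρ) {u c : V}
    (hu : ProperDesc T ρ u) (hus : Supported T h D w u) (hc : c ∈ T.children u)
    (hcp : 0 < h c) : Supported T h D w c := by
  have hdc : T.depth c = T.depth u + 1 := depth_child T hc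
  obtain ⟨j, hj, hjp, hjd⟩ := hu
  unfold Supported at hus ⊢
  by_cases h1 : T.depth u ≤ D
  · rcases Nat.lt_or_ge (T.depth u) D with h2 | h2
    · -- depth u < D
      rw [if_pos (by omega)]
      rw [if_pos h1] at hus
      by_contra hcs
      push_neg at hcs
      -- chain down from c
      obtain ⟨v', hv'D, hv'p, hv'pos⟩ := chain_down T hcoh hnn D (D - T.depth c) c
        (by omega) hcp
      have hv'w : v' = w := by
        by_contra hne
        obtain ⟨k, hk, hk2⟩ := hcs v' hv'D hne hv'p
        linarith [hv'pos k hk]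
      rw [hv'w] at hv'p
      -- u is an ancestor of w
      have hanc : AncOrEq T u w := by
        refine ⟨(D - T.depth c) + 1, ?_, by omega⟩
        rw [Function.iterate_succ_apply', hv'p]; exact hc.1
      have hall := hρ.2.2 u hanc (by omega)
      -- but u supported gives a supported child
      obtain ⟨v, hvD, hvw, hvp, hvpos⟩ := hus
      set m := D - T.depth u - 1 with hm
      set c₀ := T.parent^[m] v with hc₀
      have hpc₀ : T.parent c₀ = u := by
        have h4 : T.parent^[m + 1] v = T.parent (T.parent^[m] v) :=
          Function.iterate_succ_apply' T.parent m v
        rw [hc₀, ← h4, show m + 1 = D - T.depth u from by omega, hvp]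
      have hc₀r : c₀ ≠ T.root := by
        intro hh
        rw [hh, T.parent_root] at hpc₀
        have : T.depth u = 0 := by rw [← hpc₀, T.depth_root]
        omega
      have hc₀c : c₀ ∈ T.children u := ⟨hpc₀, hc₀r⟩
      have hdc₀ : T.depth c₀ = T.depth u + 1 := depth_child T hc₀c
      apply hall c₀ hc₀c
      unfold Supported
      rw [if_pos (by omega)]
      refine ⟨v, hvD, hvw, ?_, ?_⟩
      · rw [show D - T.depth c₀ = m from by omega]
      · intro k hk
        exact hvpos k (by omega)
    · -- depth u = D
      have hdu : T.depth u = D := by omega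
      rw [if_pos h1] at hus
      obtain ⟨v, hvD, hvw, hvp, hvpos⟩ := hus
      rw [show D - T.depth u = 0 from by omega] at hvp hvpos
      simp only [Function.iterate_zero_apply] at hvp
      subst hvp
      rw [if_neg (by omega)]
      rw [show T.depth c - D = 1 from by omega]
      simp only [Function.iterate_one, hc.1]
      exact ⟨hvw, by simpa using hvpos 0 le_rfl⟩
  · -- depth u > D
    rw [if_neg h1] at hus
    rw [if_neg (by omega)]
    rw [show T.depth c - D = (T.depth u - D) + 1 from by omega,
      Function.iterate_succ_apply, hc.1]
    exact hus

lemma properDesc_child {ρ u c : V} (hu : ProperDesc T ρ u)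
    (hc : c ∈ T.children u) : ProperDesc T ρ c := by
  obtain ⟨j, hj, hjp, hjd⟩ := hu
  refine ⟨j + 1, by omega, ?_, ?_⟩
  · rw [Function.iterate_succ_apply, hc.1]; exact hjp
  · rw [depth_child T hc]; omega

lemma not_properDesc_self (ρ : V) : ¬ ProperDesc T ρ ρ := by
  rintro ⟨j, hj, -, hjd⟩
  omega

end Aux
section Main

variable {V : Type} (T : RTree V) {h : V → ℝ} {D : ℕ} {w ρ : V}

lemma renorm_sum_children (hcoh : Coherent T h) (hnn : ∀ v : V, 0 ≤ h v)
    (hwD : T.depth w = D) (hρ : IsRedistPoint T h D w ρ) {u : V}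
    (hu : ProperDesc T ρ u) :
    (∑ c ∈ (children_finite T u).toFinset, renorm T h D w ρ c)
      = renorm T h D w ρ u := by
  by_cases hs : Supported T h D w u
  · have hval : ∀ c ∈ (children_finite T u).toFinset, renorm T h D w ρ c
        = (Ztot T h ρ / Zplus T h D w ρ) * h c := by
      intro c hcm
      have hc : c ∈ T.children u := (children_finite T u).mem_toFinset.mp hcm
      have hpd : ProperDesc T ρ c := properDesc_child T hu hc
      by_cases hcs : Supported T h D w c
      · simp only [renorm]
        rw [if_pos hpd, if_pos hcs]
      · have hc0 : h c = 0 := by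
          by_contra hne
          exact hcs (child_supported T hcoh hnn hwD hρ ⟨hu.choose, hu.choose_spec⟩ hs hc
            (lt_of_le_of_ne (hnn c) (Ne.symm hne)))
        simp only [renorm]
        rw [if_pos hpd, if_neg hcs, hc0, mul_zero]
    rw [Finset.sum_congr rfl hval, ← Finset.mul_sum, ← h_eq_sum T hcoh u]
    simp only [renorm]
    rw [if_pos hu, if_pos hs]
  · have hval : ∀ c ∈ (children_finite T u).toFinset, renorm T h D w ρ c = 0 := by
      intro c hcm
      have hc : c ∈ T.children u := (children_finite T u).mem_toFinset.mp hcm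
      have hpd : ProperDesc T ρ c := properDesc_child T hu hc
      have hcs : ¬ Supported T h D w c := fun hss =>
        hs (supported_of_child T hcoh hnn hc hss)
      simp only [renorm]
      rw [if_pos hpd, if_neg hcs]
    rw [Finset.sum_eq_zero hval]
    simp only [renorm]
    rw [if_pos hu, if_neg hs]

lemma descAt_zero (ρ : V) : T.descAt 0 ρ = {ρ} := by
  ext u
  simp only [RTree.descAt, Function.iterate_zero_apply, add_zero, Set.mem_setOf_eq,
    Set.mem_singleton_iff]
  constructor
  · exact fun h1 => h1.1
  · rintro rfl; exact ⟨rfl, rfl⟩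

lemma descAt_one (ρ : V) : T.descAt 1 ρ = T.children ρ := by
  ext u
  simp only [RTree.descAt, Function.iterate_one, Set.mem_setOf_eq, RTree.children]
  constructor
  · rintro ⟨h1, h2⟩
    refine ⟨h1, fun hr => ?_⟩
    rw [hr, T.depth_root] at h2
    omega
  · rintro ⟨h1, h2⟩
    refine ⟨h1, ?_⟩
    have := T.depth_parent u h2
    rw [h1] at this
    omega

lemma descAt_succ (ρ : V) (e : ℕ) :
    (descAt_finite T (e + 1) ρ).toFinset =
      (descAt_finite T e ρ).toFinset.biUnion
        (fun u => (children_finite T u).toFinset) := by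
  ext x
  simp only [Set.Finite.mem_toFinset, Finset.mem_biUnion, RTree.descAt,
    Set.mem_setOf_eq, Set.Finite.mem_toFinset]
  constructor
  · rintro ⟨h1, h2⟩
    have hxr : x ≠ T.root := by
      intro hr; rw [hr, T.depth_root] at h2; omega
    have hdp := T.depth_parent x hxr
    refine ⟨T.parent x, ⟨?_, by omega⟩, ⟨rfl, hxr⟩⟩
    rw [← Function.iterate_succ_apply]; exact h1
  · rintro ⟨u, ⟨h1, h2⟩, hc⟩
    have hdc := depth_child T hc
    refine ⟨?_, by omega⟩
    rw [Function.iterate_succ_apply, hc.1]; exact h1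

lemma base_zero (ρ : V) :
    (∑ᶠ u ∈ T.descAt 0 ρ, renorm T h D w ρ u) = h ρ := by
  rw [descAt_zero, finsum_mem_singleton]
  simp only [renorm]
  rw [if_neg (not_properDesc_self T ρ)]

lemma base_one (hcoh : Coherent T h) (hZp : 0 < Zplus T h D w ρ) :
    (∑ᶠ u ∈ T.descAt 1 ρ, renorm T h D w ρ u) = h ρ := by
  rw [descAt_one, finsum_mem_eq_finite_toFinset_sum _ (children_finite T ρ)]
  have hval : ∀ c ∈ (children_finite T ρ).toFinset, renorm T h D w ρ c
      = if Supported T h D w c then (Ztot T h ρ / Zplus T h D w ρ) * h c else 0 := by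
    intro c hcm
    have hc : c ∈ T.children ρ := (children_finite T ρ).mem_toFinset.mp hcm
    have hpd : ProperDesc T ρ c := ⟨1, one_pos, by simpa using hc.1, by
      rw [depth_child T hc]⟩
    simp only [renorm]
    rw [if_pos hpd]
  rw [Finset.sum_congr rfl hval, ← Finset.sum_filter, ← Finset.mul_sum]
  have hZ : (∑ c ∈ (children_finite T ρ).toFinset.filter
      (fun c => Supported T h D w c), h c) = Zplus T h D w ρ := by
    rw [Zplus, finsum_mem_eq_finite_toFinset_sum _
      ((children_finite T ρ).inter_of_left _)]
    apply Finset.sum_congr _ (fun _ _ => rfl)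
    ext c
    simp [Set.Finite.mem_toFinset, Finset.mem_filter]
  rw [hZ, div_mul_cancel₀ _ (ne_of_gt hZp), Ztot]
  exact (hcoh.2 ρ).symm

lemma step_sum (hcoh : Coherent T h) (hnn : ∀ v : V, 0 ≤ h v)
    (hwD : T.depth w = D) (hρ : IsRedistPoint T h D w ρ) (e : ℕ) (he : 1 ≤ e) :
    (∑ᶠ u ∈ T.descAt (e + 1) ρ, renorm T h D w ρ u)
      = ∑ᶠ u ∈ T.descAt e ρ, renorm T h D w ρ u := by
  have hdisj : (((descAt_finite T e ρ).toFinset : Finset V) : Set V).PairwiseDisjoint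
      (fun u => (children_finite T u).toFinset) := by
    intro u _ u' _ hne
    rw [Function.onFun, Finset.disjoint_left]
    intro x hx hx'
    have h1 := ((children_finite T u).mem_toFinset.mp hx).1
    have h2 := ((children_finite T u').mem_toFinset.mp hx').1
    exact hne (h1.symm.trans h2)
  rw [finsum_mem_eq_finite_toFinset_sum _ (descAt_finite T (e + 1) ρ),
    finsum_mem_eq_finite_toFinset_sum _ (descAt_finite T e ρ),
    descAt_succ T ρ e, Finset.sum_biUnion hdisj]
  apply Finset.sum_congr rfl
  intro u hu
  have hmem : u ∈ T.descAt e ρ := (descAt_finite T e ρ).mem_toFinset.mp hu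
  exact renorm_sum_children T hcoh hnn hwD hρ ⟨e, he, hmem.1, hmem.2⟩

end Main
/-- Renormalization preserves the weight of the redistribution point: the sum
of the renormalized weights over all descendants of `ρ` lying `e` levels below
`ρ` equals the original weight `h ρ`, for every `e ≥ 0`. -/
theorem stmt5 {V : Type} (T : RTree V) (h : V → ℝ) (D : ℕ) (w ρ : V)
    (hcoh : Coherent T h) (hnn : ∀ v : V, 0 ≤ h v)
    (hwD : T.depth w = D)
    (hρ : IsRedistPoint T h D w ρ)
    (hZp : 0 < Zplus T h D w ρ) :
    ∀ e : ℕ, (∑ᶠ u ∈ T.descAt e ρ, renorm T h D w ρ u) = h ρ := by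
  intro e
  induction e with
  | zero => exact base_zero T ρ
  | succ n ih =>
    cases n with
    | zero => exact base_one T hcoh hZp
    | succ m =>
      rw [step_sum T hcoh hnn hwD hρ (m + 1) (by omega)]
      exact ih
end

section
/- If a vertex is always supported throughout the iterated-renormalization sequence, then the sequence of weights assigned to it is monotonically nondecreasing and bounded above by 1, hence converges. -/
open scoped Classical

section Aux

variable {V : Type}

lemma children_finite_s8 (T : RTree V) (v : V) : (T.children v).Finite := by
  apply (T.level_finite (T.depth v + 1)).subset
  rintro u ⟨hp, hr⟩
  have := T.depth_parent u hr
  rw [hp] at this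
  simpa using this.symm

lemma level_sum (T : RTree V) (h : V → ℝ) (hcoh : Coherent T h) :
    ∀ d : ℕ, ∑ u ∈ (T.level_finite d).toFinset, h u = 1 := by
  intro d
  induction d with
  | zero =>
    have : (T.level_finite 0).toFinset = {T.root} := by
      ext u
      simp only [Set.Finite.mem_toFinset, Set.mem_setOf_eq, Finset.mem_singleton]
      constructor
      · intro hu
        have := T.ancestor_root u
        rwa [hu, Function.iterate_zero, id_eq] at this
      · rintro rfl; exact T.depth_root
    rw [this, Finset.sum_singleton, hcoh.1]
  | succ d ih =>
    rw [← ih]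
    rw [← Finset.sum_fiberwise_of_maps_to (g := T.parent)
      (t := (T.level_finite d).toFinset) ?_ h]
    · apply Finset.sum_congr rfl
      intro w hw
      simp only [Set.Finite.mem_toFinset, Set.mem_setOf_eq] at hw
      have hceq : (T.children w) =
          ((T.level_finite (d + 1)).toFinset.filter (fun u => T.parent u = w) : Set V) := by
        ext u
        simp only [RTree.children, Set.mem_setOf_eq, Finset.coe_filter,
          Set.Finite.mem_toFinset]
        constructor
        · rintro ⟨hp, hr⟩
          have hd := T.depth_parent u hr
          rw [hp, hw] at hd
          exact ⟨hd.symm, hp⟩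
        · rintro ⟨hd, hp⟩
          refine ⟨hp, fun hroot => ?_⟩
          rw [hroot, T.depth_root] at hd
          exact (Nat.succ_ne_zero d) hd.symm
      rw [hcoh.2 w, hceq]
      rw [finsum_mem_coe_finset]
    · intro u hu
      simp only [Set.Finite.mem_toFinset, Set.mem_setOf_eq] at hu ⊢
      have hr : u ≠ T.root := by
        intro h0
        rw [h0, T.depth_root] at hu
        exact (Nat.succ_ne_zero d) hu.symm
      have := T.depth_parent u hr
      omega

lemma weight_le_one (T : RTree V) (h : V → ℝ) (hcoh : Coherent T h)
    (hnn : ∀ v : V, 0 ≤ h v) (v : V) : h v ≤ 1 := by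
  rw [← level_sum T h hcoh (T.depth v)]
  apply Finset.single_le_sum (fun u _ => hnn u)
  simp

lemma Zplus_le_Ztot (T : RTree V) (h : V → ℝ) (hnn : ∀ v : V, 0 ≤ h v)
    (D : ℕ) (w ρ : V) : Zplus T h D w ρ ≤ Ztot T h ρ := by
  have hfin := children_finite_s8 T ρ
  have hfin' : (T.children ρ ∩ {u : V | Supported T h D w u}).Finite :=
    hfin.subset Set.inter_subset_left
  rw [Zplus, Ztot, finsum_mem_eq_finite_toFinset_sum _ hfin,
    finsum_mem_eq_finite_toFinset_sum _ hfin']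
  apply Finset.sum_le_sum_of_subset_of_nonneg
  · intro u hu
    simp only [Set.Finite.mem_toFinset] at hu ⊢
    exact hu.1
  · intro u _ _; exact hnn u

end Aux

/-- If a vertex is always supported throughout the iterated-renormalization
sequence (at no stage do all of its descendants at some depth carry zero
weight), then the sequence of weights assigned to it is monotonically
nondecreasing and bounded above by 1, hence converges. -/
theorem stmt8 {V : Type} (T : RTree V) (H : ℕ → V → ℝ)
    (hcoh : ∀ n : ℕ, Coherent T (H n)) (hnn : ∀ (n : ℕ) (v : V), 0 ≤ H n v)
    (hstep : ∀ n : ℕ, H (n + 1) = H n ∨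
      ∃ (D : ℕ) (w ρ : V), T.depth w = D ∧ IsRedistPoint T (H n) D w ρ ∧
        0 < Zplus T (H n) D w ρ ∧ H (n + 1) = renorm T (H n) D w ρ)
    (v : V)
    (hsupp : ∀ E e : ℕ, ∃ u ∈ T.descAt e v, H E u ≠ 0) :
    Monotone (fun n : ℕ => H n v) ∧ (∀ n : ℕ, H n v ≤ 1) ∧
      ∃ L : ℝ, Filter.Tendsto (fun n : ℕ => H n v) Filter.atTop (nhds L) := by
  have hpos : ∀ n : ℕ, 0 < H n v := by
    intro n
    obtain ⟨u, hu, hne⟩ := hsupp n 0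
    have : u = v := by simpa [RTree.descAt] using hu.1
    subst this
    exact lt_of_le_of_ne (hnn n u) (Ne.symm hne)
  have hmono : Monotone (fun n : ℕ => H n v) := by
    apply monotone_nat_of_le_succ
    intro n
    rcases hstep n with heq | ⟨D, w, ρ, _, _, hz, heq⟩
    · rw [heq]
    · rw [heq]
      simp only [renorm]
      by_cases hpd : ProperDesc T ρ v
      · simp only [hpd, if_true]
        by_cases hsup : Supported T (H n) D w v
        · simp only [hsup, if_true]
          refine le_mul_of_one_le_left (hnn n v) ?_
          rw [one_le_div hz]
          exact Zplus_le_Ztot T (H n) (hnn n) D w ρ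
        · exfalso
          have := hpos (n + 1)
          rw [heq] at this
          simp only [renorm, hpd, if_true, hsup, if_false] at this
          exact lt_irrefl 0 this
      · simp [hpd]
  have hle : ∀ n : ℕ, H n v ≤ 1 := fun n =>
    weight_le_one T (H n) (hcoh n) (hnn n) v
  refine ⟨hmono, hle, ?_⟩
  exact ⟨_, tendsto_atTop_ciSup hmono ⟨1, by rintro _ ⟨n, rfl⟩; exact hle n⟩⟩
end
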